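/- Let p be a prime, q = p^e a power of p, ℓ an odd prime different from p, and n a positive integer divisible by neither p nor ℓ. Let v be a nonnegative integer and γ an integer with ℓ^v ∣ γ. Then there is exactly one q-cyclotomic coset modulo ℓ^{v+1}n contained in the preimage of the coset c_{ℓ^v n/q}(γ) under the canonical projection ℤ/ℓ^{v+1}nℤ → ℤ/ℓ^v nℤ all of whose elements are divisible by ℓ^{v+1}. -/

import Mathlib

/-- The `q`-cyclotomic coset modulo `m` containing (the class of) the integer `γ`,
as a subset of `ZMod m`. -/
def cycCoset (q m : ℕ) (γ : ℤ) : Set (ZMod m) :=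
  {x | ∃ j : ℕ, x = (γ : ZMod m) * (q : ZMod m) ^ j}

lemma cycCoset_shift {q m : ℕ} {a b : ℤ} {t : ℕ} (ht : 0 < t)
    (hqt : (q : ZMod m) ^ t = 1) (j : ℕ)
    (hb : (b : ZMod m) = (a : ZMod m) * (q : ZMod m) ^ j) :
    cycCoset q m b = cycCoset q m a := by
  ext x
  constructor
  · rintro ⟨i, hi⟩
    exact ⟨j + i, by rw [hi, hb, pow_add, mul_assoc]⟩
  · rintro ⟨i, hi⟩
    refine ⟨i + j * (t - 1), ?_⟩
    have hk : j + (i + j * (t - 1)) = i + t * j := by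
      cases t with
      | zero => omega
      | succ s => simp only [Nat.succ_sub_one]; ring
    rw [hi, hb, mul_assoc, ← pow_add, hk, pow_add, pow_mul, hqt, one_pow, mul_one]

theorem stmt_8 (p e q ℓ n : ℕ) (hp : p.Prime) (he : 0 < e) (hq : q = p ^ e)
    (hℓ : ℓ.Prime) (hℓ2 : ℓ ≠ 2) (hℓp : ℓ ≠ p)
    (hn : 0 < n) (hnp : ¬ p ∣ n) (hnℓ : ¬ ℓ ∣ n)
    (v : ℕ) (γ : ℤ) (hγ : (ℓ : ℤ) ^ v ∣ γ) :
    ∃! C : Set (ZMod (ℓ ^ (v + 1) * n)),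
      (∃ δ : ℤ, C = cycCoset q (ℓ ^ (v + 1) * n) δ) ∧
      C ⊆ (ZMod.castHom (mul_dvd_mul_right (pow_dvd_pow ℓ (v.le_succ)) n)
            (ZMod (ℓ ^ v * n))) ⁻¹' (cycCoset q (ℓ ^ v * n) γ) ∧
      ∀ x ∈ C, ∃ y : ℤ, (y : ZMod (ℓ ^ (v + 1) * n)) = x ∧ (ℓ : ℤ) ^ (v + 1) ∣ y := by
  -- basic coprimality facts
  have hℓn : Nat.Coprime ℓ n := (Nat.Prime.coprime_iff_not_dvd hℓ).mpr hnℓ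
  have hℓnv1 : Nat.Coprime (ℓ ^ (v + 1)) n := Nat.Coprime.pow_left _ hℓn
  have hℓnv : Nat.Coprime (ℓ ^ v) n := Nat.Coprime.pow_left _ hℓn
  have hpℓ : Nat.Coprime p ℓ := (Nat.coprime_primes hp hℓ).mpr (fun h => hℓp h.symm)
  have hpn : Nat.Coprime p n := (Nat.Prime.coprime_iff_not_dvd hp).mpr hnp
  have hqm : Nat.Coprime q (ℓ ^ (v + 1) * n) := by
    subst hq
    exact Nat.Coprime.pow_left _ ((Nat.Coprime.pow_right _ hpℓ).mul_right hpn)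
  -- q has finite multiplicative order t modulo m = ℓ^(v+1)*n
  set m := ℓ ^ (v + 1) * n with hm
  have hm0 : 0 < m := Nat.mul_pos (Nat.pow_pos hℓ.pos) hn
  set t := Nat.totient m with htdef
  have ht : 0 < t := Nat.totient_pos.mpr hm0
  have hqt : (q : ZMod m) ^ t = 1 := by
    have h := Nat.ModEq.pow_totient hqm
    have := (ZMod.natCast_eq_natCast_iff _ _ _).mpr h
    push_cast at this
    exact this
  -- a tool: congruence mod ℓ^(v+1) and mod n gives equality in ZMod m
  have key : ∀ a b : ℤ, (ℓ : ℤ) ^ (v + 1) ∣ b - a → (n : ℤ) ∣ b - a →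
      (a : ZMod m) = (b : ZMod m) := by
    intro a b h1 h2
    rw [ZMod.intCast_eq_intCast_iff, Int.modEq_iff_dvd]
    have hcop : IsCoprime ((ℓ : ℤ) ^ (v + 1)) (n : ℤ) := by
      rw [← Nat.cast_pow]
      exact Int.isCoprime_iff_gcd_eq_one.mpr hℓnv1
    have := hcop.mul_dvd h1 h2
    rwa [hm, Nat.cast_mul, Nat.cast_pow]
  -- similar tool modulo ℓ^v * n
  have key' : ∀ a b : ℤ, (ℓ : ℤ) ^ v ∣ b - a → (n : ℤ) ∣ b - a →
      (a : ZMod (ℓ ^ v * n)) = (b : ZMod (ℓ ^ v * n)) := by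
    intro a b h1 h2
    rw [ZMod.intCast_eq_intCast_iff, Int.modEq_iff_dvd]
    have hcop : IsCoprime ((ℓ : ℤ) ^ v) (n : ℤ) := by
      rw [← Nat.cast_pow]
      exact Int.isCoprime_iff_gcd_eq_one.mpr hℓnv
    have := hcop.mul_dvd h1 h2
    rwa [Nat.cast_mul, Nat.cast_pow]
  -- construct δ with ℓ^(v+1) ∣ δ and δ ≡ γ mod n
  have hcop : IsCoprime ((ℓ : ℤ) ^ (v + 1)) (n : ℤ) := by
    rw [← Nat.cast_pow]
    exact Int.isCoprime_iff_gcd_eq_one.mpr hℓnv1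
  obtain ⟨u, w, huw⟩ := hcop
  set δ : ℤ := γ * u * (ℓ : ℤ) ^ (v + 1) with hδdef
  have hδℓ : (ℓ : ℤ) ^ (v + 1) ∣ δ := ⟨γ * u, by ring⟩
  have hδn : (n : ℤ) ∣ δ - γ := ⟨-(γ * w), by linear_combination γ * huw⟩
  have hδℓv : (ℓ : ℤ) ^ v ∣ δ - γ :=
    dvd_sub ((pow_dvd_pow _ (Nat.le_succ v)).trans hδℓ) hγ
  -- δ ≡ γ mod ℓ^v * n
  have hδγ : (γ : ZMod (ℓ ^ v * n)) = (δ : ZMod (ℓ ^ v * n)) := key' γ δ hδℓv hδn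
  refine ⟨cycCoset q m δ, ⟨⟨δ, rfl⟩, ?_, ?_⟩, ?_⟩
  · -- projection condition
    rintro x ⟨j, hj⟩
    refine ⟨j, ?_⟩
    rw [hj]
    push_cast
    rw [map_mul, map_intCast, map_pow, map_natCast, ← hδγ]
  · -- divisibility condition
    rintro x ⟨j, hj⟩
    refine ⟨δ * (q : ℤ) ^ j, ?_, Dvd.dvd.mul_right hδℓ _⟩
    push_cast
    exact hj.symm
  · -- uniqueness
    rintro C ⟨⟨δ', rfl⟩, hsub, hdiv⟩
    have hδ'mem : (δ' : ZMod m) ∈ cycCoset q m δ' := ⟨0, by simp⟩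
    obtain ⟨y, hy, hyℓ⟩ := hdiv _ hδ'mem
    obtain ⟨j, hj⟩ := hsub hδ'mem
    -- hj : castHom .. (δ' : ZMod m) = γ * q^j in ZMod (ℓ^v * n)
    have hyproj : (y : ZMod (ℓ ^ v * n)) = ((γ * (q : ℤ) ^ j : ℤ) : ZMod (ℓ ^ v * n)) := by
      have := congrArg (ZMod.castHom (mul_dvd_mul_right (pow_dvd_pow ℓ (v.le_succ)) n)
            (ZMod (ℓ ^ v * n))) hy
      rw [map_intCast] at this
      rw [this, hj]
      push_cast [-Int.cast_pow]
      ring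
    -- hence n ∣ γ q^j - y, and so m ∣ y - δ q^j
    have hyn : ((ℓ : ℤ) ^ v * (n : ℤ)) ∣ (γ * (q : ℤ) ^ j - y) := by
      have := (ZMod.intCast_eq_intCast_iff _ _ _).mp hyproj
      have h2 := Int.ModEq.dvd this
      rwa [Nat.cast_mul, Nat.cast_pow] at h2
    have hyn' : (n : ℤ) ∣ (γ * (q : ℤ) ^ j - y) := (dvd_mul_left _ _).trans hyn
    have hnd : (n : ℤ) ∣ (δ * (q : ℤ) ^ j - y) := by
      have : (n : ℤ) ∣ (δ - γ) * (q : ℤ) ^ j := hδn.mul_right _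
      have h3 := dvd_add this hyn'
      have he : (δ - γ) * (q : ℤ) ^ j + (γ * (q : ℤ) ^ j - y) = δ * (q : ℤ) ^ j - y := by ring
      rwa [he] at h3
    have hℓd : (ℓ : ℤ) ^ (v + 1) ∣ (δ * (q : ℤ) ^ j - y) :=
      dvd_sub (hδℓ.mul_right _) hyℓ
    have hyeq : (y : ZMod m) = ((δ * (q : ℤ) ^ j : ℤ) : ZMod m) := by
      have := key (δ * (q : ℤ) ^ j) y (by rwa [show y - δ * (q:ℤ)^j = -(δ * (q:ℤ)^j - y) by ring, dvd_neg]) (by rwa [show y - δ * (q:ℤ)^j = -(δ * (q:ℤ)^j - y) by ring, dvd_neg])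
      exact this.symm
    have hyδ : (y : ZMod m) = (δ : ZMod m) * (q : ZMod m) ^ j := by
      rw [hyeq]; push_cast; ring
    have h1 : cycCoset q m δ' = cycCoset q m y := by
      unfold cycCoset; rw [hy]
    rw [h1]
    exact cycCoset_shift ht hqt j hyδ
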